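/- Let E = F_q^n and let K be a subspace of E of dimension k. Then the sum over all subspaces J with K ≤ J ≤ E of μ(K,J) x^(n - dim J) y^(dim J) equals y^k · ∏_{i=0}^{n-k-1} (x - q^i y), where μ(K,J) = (-1)^(dim J - dim K) q^((dim J - dim K) choose 2) is the Möbius function of the subspace lattice of E. -/

import Mathlib

set_option linter.unusedSectionVars false

open Finset Matrix

variable {F : Type} [Field F] [Fintype F]

/-- The column space of a matrix: the span of its columns. -/
noncomputable def colspace {n m : ℕ} (M : Matrix (Fin n) (Fin m) F) :
    Submodule F (Fin n → F) :=
  Submodule.span F (Set.range Mᵀ)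

lemma col_mem_colspace {n m : ℕ} (M : Matrix (Fin n) (Fin m) F) (j : Fin m) :
    Mᵀ j ∈ colspace M :=
  Submodule.subset_span ⟨j, rfl⟩

/-- `codeSub C J = C(J) = { M ∈ C : colspace M ≤ J }`, as a submodule. -/
noncomputable def codeSub {n m : ℕ} (C : Submodule F (Matrix (Fin n) (Fin m) F))
    (J : Submodule F (Fin n → F)) : Submodule F (Matrix (Fin n) (Fin m) F) where
  carrier := {M | M ∈ C ∧ colspace M ≤ J}
  zero_mem' := ⟨C.zero_mem, by
    rw [colspace]
    refine Submodule.span_le.2 ?_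
    rintro _ ⟨j, rfl⟩
    have h : (0 : Matrix (Fin n) (Fin m) F)ᵀ j = 0 := by
      funext i; simp
    rw [h]; exact J.zero_mem⟩
  add_mem' := by
    rintro A B ⟨hA, hA'⟩ ⟨hB, hB'⟩
    refine ⟨C.add_mem hA hB, ?_⟩
    rw [colspace]
    refine Submodule.span_le.2 ?_
    rintro _ ⟨j, rfl⟩
    have h : (A + B)ᵀ j = Aᵀ j + Bᵀ j := by
      funext i; simp [Matrix.transpose_apply]
    rw [h]
    exact J.add_mem (hA' (col_mem_colspace A j)) (hB' (col_mem_colspace B j))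
  smul_mem' := by
    rintro c A ⟨hA, hA'⟩
    refine ⟨C.smul_mem c hA, ?_⟩
    rw [colspace]
    refine Submodule.span_le.2 ?_
    rintro _ ⟨j, rfl⟩
    have h : (c • A)ᵀ j = c • (Aᵀ j) := by
      funext i; simp [Matrix.transpose_apply]
    rw [h]
    exact J.smul_mem c (hA' (col_mem_colspace A j))

/-- Higher rank-support of a subcode: the sum of the column spaces of its members. -/
noncomputable def Supp {n m : ℕ} (D : Submodule F (Matrix (Fin n) (Fin m) F)) :
    Submodule F (Fin n → F) :=
  ⨆ M ∈ (D : Set (Matrix (Fin n) (Fin m) F)), colspace M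

/-- The linear functional `x ↦ ∑ i, x i * y i` (standard inner product with `y`). -/
noncomputable def dotForm {n : ℕ} (y : Fin n → F) : (Fin n → F) →ₗ[F] F where
  toFun x := ∑ i, x i * y i
  map_add' a b := by simp [add_mul, Finset.sum_add_distrib]
  map_smul' c a := by simp [Finset.mul_sum, mul_assoc]

/-- Orthogonal complement w.r.t. the standard inner product on `F^n`. -/
noncomputable def perp {n : ℕ} (J : Submodule F (Fin n → F)) : Submodule F (Fin n → F) :=
  ⨅ y ∈ (J : Set (Fin n → F)), LinearMap.ker (dotForm y)

/-- The linear functional `N ↦ Tr (M Nᵀ)`. -/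
noncomputable def traceForm {n m : ℕ} (M : Matrix (Fin n) (Fin m) F) :
    Matrix (Fin n) (Fin m) F →ₗ[F] F where
  toFun N := Matrix.trace (M * Nᵀ)
  map_add' A B := by simp [Matrix.transpose_add, Matrix.mul_add]
  map_smul' c A := by simp [Matrix.transpose_smul, Matrix.mul_smul]

/-- The trace dual code. -/
noncomputable def dualCode {n m : ℕ} (C : Submodule F (Matrix (Fin n) (Fin m) F)) :
    Submodule F (Matrix (Fin n) (Fin m) F) :=
  ⨅ M ∈ (C : Set (Matrix (Fin n) (Fin m) F)), LinearMap.ker (traceForm M)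

/-- Gaussian binomial coefficient `[a choose r]_q` as a rational number. -/
noncomputable def gb (q : ℚ) (a r : ℕ) : ℚ :=
  ∏ i ∈ Finset.range r, (q ^ a - q ^ i) / (q ^ r - q ^ i)

/-- Gaussian binomial with integer upper argument:
`[a choose b]_q = ∏_{i=0}^{b-1} (q^{a-i}-1)/(q^{b-i}-1)`. -/
noncomputable def gbZ (q : ℚ) (a : ℤ) (b : ℕ) : ℚ :=
  ∏ i ∈ Finset.range b, (q ^ (a - (i : ℤ)) - 1) / (q ^ ((b : ℤ) - (i : ℤ)) - 1)

section Aux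
lemma gb_eq_div (q : ℚ) (a r : ℕ) :
    gb q a r = (∏ i ∈ range r, (q ^ a - q ^ i)) / (∏ i ∈ range r, (q ^ r - q ^ i)) := by
  rw [gb, Finset.prod_div_distrib]

lemma den_ne_zero {Q : ℚ} (hQ : 1 < Q) (r : ℕ) :
    (∏ i ∈ range r, (Q ^ r - Q ^ i)) ≠ 0 := by
  refine Finset.prod_ne_zero_iff.2 fun i hi => ?_
  have : Q ^ i < Q ^ r := pow_lt_pow_right₀ hQ (Finset.mem_range.1 hi)
  linarith

lemma num_shift (Q : ℚ) (a s : ℕ) :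
    (∏ i ∈ range (s+1), (Q ^ (a+1) - Q ^ i))
      = (Q ^ (a+1) - 1) * (Q ^ s * ∏ i ∈ range s, (Q ^ a - Q ^ i)) := by
  rw [Finset.prod_range_succ']
  have h : ∀ i ∈ range s, Q ^ (a+1) - Q ^ (i+1) = Q * (Q ^ a - Q ^ i) := by
    intro i _; ring
  rw [Finset.prod_congr rfl h, Finset.prod_mul_distrib, Finset.prod_const, card_range]
  ring

lemma den_shift (Q : ℚ) (s : ℕ) :
    (∏ i ∈ range (s+1), (Q ^ (s+1) - Q ^ i))
      = (Q ^ (s+1) - 1) * (Q ^ s * ∏ i ∈ range s, (Q ^ s - Q ^ i)) := by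
  rw [Finset.prod_range_succ']
  have h : ∀ i ∈ range s, Q ^ (s+1) - Q ^ (i+1) = Q * (Q ^ s - Q ^ i) := by
    intro i _; ring
  rw [Finset.prod_congr rfl h, Finset.prod_mul_distrib, Finset.prod_const, card_range]
  ring

lemma gb_pascal {Q : ℚ} (hQ : 1 < Q) (m s : ℕ) (hs : s ≤ m) :
    gb Q (m+1) (s+1) = gb Q m (s+1) + Q ^ (m - s) * gb Q m s := by
  obtain ⟨t, rfl⟩ : ∃ t, m = s + t := ⟨m - s, by omega⟩
  have h1 : s + t - s = t := by omega
  rw [gb_eq_div, gb_eq_div, gb_eq_div, h1, num_shift Q (s+t) s,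
    Finset.prod_range_succ (f := fun i => Q ^ (s+t) - Q ^ i), den_shift Q s]
  have hD := den_ne_zero hQ s
  have h2 : Q ^ (s+1) - (1:ℚ) ≠ 0 := by
    have : (1:ℚ) < Q ^ (s+1) := one_lt_pow₀ hQ (by omega)
    linarith
  have h3 : (Q:ℚ) ≠ 0 := by linarith
  field_simp
  ring

lemma gb_zero (Q : ℚ) (a : ℕ) : gb Q a 0 = 1 := by simp [gb]

lemma gb_of_lt (Q : ℚ) {a r : ℕ} (h : a < r) : gb Q a r = 0 := by
  apply Finset.prod_eq_zero (Finset.mem_range.2 h); simp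

theorem qbinom {Q : ℚ} (hQ : 1 < Q) (x y : ℚ) (m : ℕ) :
    ∑ ℓ ∈ range (m+1), gb Q m ℓ * ((-1:ℚ)^ℓ * Q^(ℓ.choose 2) * x^(m-ℓ) * y^ℓ)
      = ∏ i ∈ range m, (x - Q^i * y) := by
  induction m with
  | zero => simp [gb]
  | succ m ih =>
    rw [Finset.prod_range_succ, ← ih]
    rw [Finset.sum_range_succ'
      (fun ℓ => gb Q (m+1) ℓ * ((-1:ℚ)^ℓ * Q^(ℓ.choose 2) * x^(m+1-ℓ) * y^ℓ)) (m+1)]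
    have step2 : ∀ ℓ ∈ range (m+1),
        gb Q (m+1) (ℓ+1) * ((-1:ℚ)^(ℓ+1) * Q^((ℓ+1).choose 2) * x^(m+1-(ℓ+1)) * y^(ℓ+1))
          = gb Q m (ℓ+1) * ((-1:ℚ)^(ℓ+1) * Q^((ℓ+1).choose 2) * x^(m+1-(ℓ+1)) * y^(ℓ+1))
            + (gb Q m ℓ * ((-1:ℚ)^ℓ * Q^(ℓ.choose 2) * x^(m-ℓ) * y^ℓ)) * (-(Q^m * y)) := by
      intro ℓ hℓ
      have hℓm : ℓ ≤ m := Nat.lt_succ_iff.1 (Finset.mem_range.1 hℓ)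
      rw [gb_pascal hQ m ℓ hℓm, add_mul]
      congr 1
      have h1 : m+1-(ℓ+1) = m - ℓ := by omega
      have h2 : (ℓ+1).choose 2 = ℓ.choose 2 + ℓ := by
        rw [Nat.choose_succ_succ' ℓ 1, Nat.choose_one_right, Nat.add_comm]
      rw [h1, h2]
      have h3 : Q ^ (m - ℓ) * Q ^ (ℓ.choose 2 + ℓ) = Q ^ (ℓ.choose 2) * Q ^ m := by
        rw [← pow_add, ← pow_add]; congr 1; omega
      linear_combination (-(-1:ℚ)^ℓ * gb Q m ℓ * x^(m-ℓ) * y^ℓ * y) * h3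
    rw [Finset.sum_congr rfl step2, Finset.sum_add_distrib]
    have hB : (∑ ℓ ∈ range (m+1),
        (gb Q m ℓ * ((-1:ℚ)^ℓ * Q^(ℓ.choose 2) * x^(m-ℓ) * y^ℓ)) * (-(Q^m * y)))
        = (∑ ℓ ∈ range (m+1), gb Q m ℓ * ((-1:ℚ)^ℓ * Q^(ℓ.choose 2) * x^(m-ℓ) * y^ℓ))
            * (-(Q^m * y)) := (Finset.sum_mul _ _ _).symm
    rw [hB]
    have hfirst : gb Q (m+1) 0 * ((-1:ℚ)^0 * Q^(Nat.choose 0 2) * x^(m+1-0) * y^0)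
        = gb Q m 0 * ((-1:ℚ)^0 * Q^(Nat.choose 0 2) * x^(m+1-0) * y^0) := by
      rw [gb_zero, gb_zero]
    have hA : (∑ ℓ ∈ range (m+1),
          gb Q m (ℓ+1) * ((-1:ℚ)^(ℓ+1) * Q^((ℓ+1).choose 2) * x^(m+1-(ℓ+1)) * y^(ℓ+1)))
        + gb Q (m+1) 0 * ((-1:ℚ)^0 * Q^(Nat.choose 0 2) * x^(m+1-0) * y^0)
        = (∑ ℓ ∈ range (m+1), gb Q m ℓ * ((-1:ℚ)^ℓ * Q^(ℓ.choose 2) * x^(m-ℓ) * y^ℓ)) * x := by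
      rw [hfirst,
        ← Finset.sum_range_succ'
          (fun ℓ => gb Q m ℓ * ((-1:ℚ)^ℓ * Q^(ℓ.choose 2) * x^(m+1-ℓ) * y^ℓ)) (m+1),
        Finset.sum_range_succ, gb_of_lt Q (Nat.lt_succ_self m), zero_mul, add_zero,
        Finset.sum_mul]
      refine Finset.sum_congr rfl fun ℓ hℓ => ?_
      have hℓm : ℓ ≤ m := Nat.lt_succ_iff.1 (Finset.mem_range.1 hℓ)
      have h1 : m+1-ℓ = (m-ℓ)+1 := by omega
      rw [h1]; ring
    rw [add_right_comm, hA]  -- reorder: (∑A + ∑B) + first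
    ring

section Counting
variable {F : Type} [Field F] [Fintype F]
variable {V : Type} [AddCommGroup V] [Module F V] [Finite V]

noncomputable def fiber_equiv (r : ℕ) (W : Submodule F V) (hW : Module.finrank F W = r) :
    {s : {s : Fin r → V // LinearIndependent F s} //
        Submodule.span F (Set.range s.1) = W}
      ≃ {t : Fin r → W // LinearIndependent F t} := by
  haveI : Module.Finite F V := (Module.Finite.of_finite : Module.Finite F V)
  refine
  { toFun := fun s => ⟨fun i => ⟨s.1.1 i, by
      have h : s.1.1 i ∈ Submodule.span F (Set.range s.1.1) :=
        Submodule.subset_span ⟨i, rfl⟩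
      exact (le_of_eq s.2) h⟩, ?_⟩
    invFun := fun t => ⟨⟨fun i => (t.1 i : V), ?_⟩, ?_⟩
    left_inv := fun s => by ext i; rfl
    right_inv := fun t => by ext i; rfl }
  · exact LinearIndependent.of_comp W.subtype (by exact s.1.2)
  · exact t.2.map' W.subtype (Submodule.ker_subtype W)
  · have hsp : Submodule.span F (Set.range t.1) = ⊤ :=
      t.2.span_eq_top_of_card_eq_finrank' (by simp [hW])
    have : Set.range (fun i => (t.1 i : V)) = W.subtype '' Set.range t.1 := by
      ext v; simp [Submodule.coe_subtype, Set.range_comp]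
    rw [this, ← Submodule.map_span, hsp, Submodule.map_top, Submodule.range_subtype]

set_option maxHeartbeats 1000000 in
lemma card_subspaces_mul (r : ℕ) (hr : r ≤ Module.finrank F V) :
    (Nat.card {W : Submodule F V // Module.finrank F W = r} : ℚ)
        * ∏ i ∈ range r, ((Fintype.card F : ℚ)^r - (Fintype.card F : ℚ)^i)
      = ∏ i ∈ range r,
          ((Fintype.card F : ℚ)^(Module.finrank F V) - (Fintype.card F : ℚ)^i) := by
  haveI : Module.Finite F V := (Module.Finite.of_finite : Module.Finite F V)
  haveI : Finite (Submodule F V) :=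
    Finite.of_injective (fun W : Submodule F V => (W : Set V)) SetLike.coe_injective
  set q := Fintype.card F with hq
  -- cast of card_linearIndependent
  classical
  have hcast : ∀ (U : Type) [AddCommGroup U] [Module F U] [Finite U],
      r ≤ Module.finrank F U →
      (Nat.card {s : Fin r → U // LinearIndependent F s} : ℚ)
        = ∏ i ∈ range r, ((q:ℚ)^(Module.finrank F U) - (q:ℚ)^i) := by
    intro U _ _ _ hu
    rw [card_linearIndependent hu, Nat.cast_prod,
      Fin.prod_univ_eq_prod_range (fun i => ((q^(Module.finrank F U) - q^i : ℕ) : ℚ)) r]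
    refine Finset.prod_congr rfl fun i hi => ?_
    have h1 : q^i ≤ q^(Module.finrank F U) :=
      Nat.pow_le_pow_right Fintype.card_pos (le_trans (le_of_lt (Finset.mem_range.1 hi)) hu)
    rw [Nat.cast_sub h1]
    push_cast
    ring
  -- partition independent families by their span
  haveI : Fintype (Submodule F V) := Fintype.ofFinite _
  haveI : Fintype V := Fintype.ofFinite _
  let σ : {s : Fin r → V // LinearIndependent F s} →
      {W : Submodule F V // Module.finrank F W = r} :=
    fun s => ⟨Submodule.span F (Set.range s.1), by
      rw [finrank_span_eq_card s.2, Fintype.card_fin]⟩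
  have e1 : (Nat.card {s : Fin r → V // LinearIndependent F s} : ℚ)
      = ∑ W : {W : Submodule F V // Module.finrank F W = r},
          (Nat.card {s // σ s = W} : ℚ) := by
    rw [← Nat.card_congr (Equiv.sigmaFiberEquiv σ)]
    simp [Nat.card_eq_fintype_card, Fintype.card_sigma]
  have e2 : ∀ W : {W : Submodule F V // Module.finrank F W = r},
      (Nat.card {s // σ s = W} : ℚ) = ∏ i ∈ range r, ((q:ℚ)^r - (q:ℚ)^i) := by
    intro W
    have e := (Equiv.subtypeEquivRight
        (fun s => ⟨fun h => congrArg Subtype.val h, fun h => Subtype.ext h⟩ :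
          ∀ s, σ s = W ↔ Submodule.span F (Set.range s.1) = W.1)).trans
      (fiber_equiv r W.1 W.2)
    rw [Nat.card_congr e, hcast W.1 (by rw [W.2]), W.2]
  have e3 := hcast V hr
  rw [e3, Finset.sum_congr rfl (fun W _ => e2 W), Finset.sum_const, nsmul_eq_mul,
    Finset.card_univ] at e1
  rw [Nat.card_eq_fintype_card]
  exact e1.symm

end Counting
section Main
variable {F : Type} [Field F] [Fintype F]

lemma finrank_comap_mkQ {V : Type} [AddCommGroup V] [Module F V] [FiniteDimensional F V]
    (K : Submodule F V) (W : Submodule F (V ⧸ K)) :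
    Module.finrank F (W.comap K.mkQ) = Module.finrank F W + Module.finrank F K := by
  set J := W.comap K.mkQ with hJ
  have hKJ : K ≤ J := by
    intro x hx
    have : K.mkQ x = 0 := (Submodule.Quotient.mk_eq_zero K).2 hx
    simp [hJ, Submodule.mem_comap, this]
  let f : J →ₗ[F] V ⧸ K := K.mkQ.comp J.subtype
  have hrange : LinearMap.range f = W := by
    rw [LinearMap.range_comp, Submodule.range_subtype, hJ, Submodule.map_comap_eq,
      Submodule.range_mkQ, top_inf_eq]
  have hker : LinearMap.ker f = K.comap J.subtype := by
    rw [LinearMap.ker_comp, Submodule.ker_mkQ]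
  have h1 := LinearMap.finrank_range_add_finrank_ker f
  rw [hrange, hker, (Submodule.comapSubtypeEquivOfLe hKJ).finrank_eq] at h1
  omega

end Main
end Aux

/-- Sum of the Möbius function times monomials over the interval `[K, E]` in the
subspace lattice of `E = F_q^n`. -/

theorem mobius_interval_sum (n k : ℕ) (K : Submodule F (Fin n → F))
    (hK : Module.finrank F K = k) (x y : ℚ) :
    (∑ᶠ J ∈ {J : Submodule F (Fin n → F) | K ≤ J},
        (-1 : ℚ) ^ (Module.finrank F J - k) *
          (Fintype.card F : ℚ) ^ ((Module.finrank F J - k).choose 2) *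
          x ^ (n - Module.finrank F J) * y ^ (Module.finrank F J))
      = y ^ k * ∏ i ∈ Finset.range (n - k), (x - (Fintype.card F : ℚ) ^ i * y) := by
  classical
  set Q : ℚ := (Fintype.card F : ℚ) with hQdef
  have hq1 : 1 < Q := by
    rw [hQdef]; exact_mod_cast Fintype.one_lt_card (α := F)
  have hn : Module.finrank F (Fin n → F) = n := by
    simp [Module.finrank_fintype_fun_eq_card]
  have hkn : k ≤ n := by
    have := Submodule.finrank_le K
    rw [hn, hK] at this; exact this
  set m := n - k with hm
  have hquot : Module.finrank F ((Fin n → F) ⧸ K) = m := by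
    have := Submodule.finrank_quotient_add_finrank K
    rw [hn, hK] at this; omega
  set f : Submodule F (Fin n → F) → ℚ := fun J =>
    (-1 : ℚ) ^ (Module.finrank F J - k) * Q ^ ((Module.finrank F J - k).choose 2) *
      x ^ (n - Module.finrank F J) * y ^ (Module.finrank F J) with hf
  -- finsum to sum over the subtype
  have hfin : ({J : Submodule F (Fin n → F) | K ≤ J}).Finite := Set.toFinite _
  rw [finsum_mem_eq_finite_toFinset_sum _ hfin]
  rw [Finset.sum_subtype hfin.toFinset (p := fun J => K ≤ J)
    (fun J => hfin.mem_toFinset) f]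
  -- reindex along the correspondence theorem
  refine (Fintype.sum_equiv (Submodule.comapMkQRelIso K).toEquiv
    (fun W => f ((Submodule.comapMkQRelIso K).toEquiv W).1)
    (fun J : {J : Submodule F (Fin n → F) // K ≤ J} => f J.1) (fun _ => rfl)).symm.trans ?_
  have hterm : ∀ W : Submodule F ((Fin n → F) ⧸ K),
      f ((Submodule.comapMkQRelIso K).toEquiv W).1
        = ((-1 : ℚ) ^ (Module.finrank F W) * Q ^ ((Module.finrank F W).choose 2) *
            x ^ (m - Module.finrank F W) * y ^ (Module.finrank F W)) * y ^ k := by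
    intro W
    have hr : Module.finrank F (((Submodule.comapMkQRelIso K).toEquiv W).1)
        = Module.finrank F W + k := by
      rw [← hK]; exact finrank_comap_mkQ K W
    have hWm : Module.finrank F W ≤ m := by
      rw [← hquot]; exact Submodule.finrank_le W
    rw [hf]
    simp only [hr]
    have h1 : Module.finrank F W + k - k = Module.finrank F W := by omega
    have h2 : n - (Module.finrank F W + k) = m - Module.finrank F W := by omega
    rw [h1, h2, pow_add]
    ring
  rw [Fintype.sum_congr _ _ hterm, ← Finset.sum_mul]
  -- group by dimension
  have hgroup : ∑ W : Submodule F ((Fin n → F) ⧸ K),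
      ((-1 : ℚ) ^ (Module.finrank F W) * Q ^ ((Module.finrank F W).choose 2) *
        x ^ (m - Module.finrank F W) * y ^ (Module.finrank F W))
      = ∑ ℓ ∈ range (m+1), gb Q m ℓ *
          ((-1 : ℚ) ^ ℓ * Q ^ (ℓ.choose 2) * x ^ (m - ℓ) * y ^ ℓ) := by
    rw [← Finset.sum_fiberwise_of_maps_to
      (g := fun W : Submodule F ((Fin n → F) ⧸ K) => Module.finrank F W)
      (t := range (m+1))
      (fun W _ => Finset.mem_range.2 (by
        have h5 : Module.finrank F W ≤ m := by rw [← hquot]; exact Submodule.finrank_le W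
        simpa using Nat.lt_succ_of_le h5))]
    refine Finset.sum_congr rfl fun ℓ hℓ => ?_
    have hℓm : ℓ ≤ m := Nat.lt_succ_iff.1 (Finset.mem_range.1 hℓ)
    have hsum : ∑ W ∈ Finset.univ.filter
          (fun W : Submodule F ((Fin n → F) ⧸ K) => Module.finrank F W = ℓ),
        ((-1 : ℚ) ^ (Module.finrank F W) * Q ^ ((Module.finrank F W).choose 2) *
          x ^ (m - Module.finrank F W) * y ^ (Module.finrank F W))
        = (Finset.univ.filter
            (fun W : Submodule F ((Fin n → F) ⧸ K) => Module.finrank F W = ℓ)).card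
          * ((-1 : ℚ) ^ ℓ * Q ^ (ℓ.choose 2) * x ^ (m - ℓ) * y ^ ℓ) := by
      rw [Finset.sum_congr rfl (fun W hW => by
        rw [(Finset.mem_filter.1 hW).2])]
      rw [Finset.sum_const, nsmul_eq_mul]
    rw [hsum]
    congr 1
    -- card = gb
    have hcard : ((Finset.univ.filter
        (fun W : Submodule F ((Fin n → F) ⧸ K) => Module.finrank F W = ℓ)).card : ℚ)
        = gb Q m ℓ := by
      have h := card_subspaces_mul (V := (Fin n → F) ⧸ K) ℓ (by rw [hquot]; exact hℓm)
      rw [hquot] at h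
      rw [gb_eq_div, eq_div_iff (den_ne_zero hq1 ℓ), ← h,
        Nat.card_eq_fintype_card, Fintype.card_subtype]
    exact hcard
  rw [hgroup, qbinom hq1 x y m]
  ring
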